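/- Let (ξ_i)_{i∈ℕ} and (ω_i)_{i∈ℕ} be real random variables on a probability space such that the combined family {ξ_i, ω_i : i ∈ ℕ} is independent and each has law N(0,1). Let (λ_i)_{i∈ℕ} be nonnegative reals with Σ_i λ_i < ∞, let γ > 0, set η_i = √γ √λ_i ξ_i + ω_i, and let 𝒢 = σ(η_i, i ∈ ℕ). Then Σ_{i∈ℕ} E[(√λ_i ξ_i − E(√λ_i ξ_i | 𝒢))²] = Σ_{i∈ℕ} λ_i / (1 + λ_i γ). -/

import Mathlib

open MeasureTheory ProbabilityTheory

open MeasureTheory ProbabilityTheory Real MeasurableSpace Filter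
open scoped ENNReal NNReal

noncomputable section
namespace NCA


lemma pdf_toNN : gaussianReal 0 1
    = (volume : Measure ℝ).withDensity (fun x => ((Real.toNNReal (gaussianPDFReal 0 1 x)) : ℝ≥0∞)) := by
  rw [gaussianReal_of_var_ne_zero 0 one_ne_zero]
  rfl

lemma integrable_gauss_transfer {g : ℝ → ℝ} (hg : Integrable (fun x => gaussianPDFReal 0 1 x * g x) volume) :
    Integrable g (gaussianReal 0 1) := by
  rw [pdf_toNN, integrable_withDensity_iff ((measurable_gaussianPDFReal 0 1).real_toNNReal.coe_nnreal_ennreal)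
    (Eventually.of_forall fun x => ENNReal.coe_lt_top)]
  simpa [mul_comm, ENNReal.coe_toReal, Real.coe_toNNReal _ (gaussianPDFReal_nonneg 0 1 _)] using hg

lemma integral_gauss_transfer (g : ℝ → ℝ) :
    ∫ x, g x ∂(gaussianReal 0 1) = ∫ x, gaussianPDFReal 0 1 x * g x := by
  rw [pdf_toNN, integral_withDensity_eq_integral_smul ((measurable_gaussianPDFReal 0 1).real_toNNReal) g]
  congr 1; ext x
  simp [NNReal.smul_def, Real.coe_toNNReal _ (gaussianPDFReal_nonneg 0 1 _)]

lemma pdf_eq (x : ℝ) : gaussianPDFReal 0 1 x = (√(2 * π))⁻¹ * rexp (-(2⁻¹) * x ^ 2) := by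
  simp only [gaussianPDFReal_def, NNReal.coe_one, mul_one]
  congr 1
  ring

lemma integrable_exp_half : Integrable (fun x : ℝ => rexp (-(2⁻¹) * x ^ 2)) volume := by
  simpa using integrable_exp_neg_mul_sq (by norm_num : (0:ℝ) < 2⁻¹)

lemma integrable_mul_exp_half : Integrable (fun x : ℝ => x * rexp (-(2⁻¹) * x ^ 2)) volume := by
  simpa using integrable_mul_exp_neg_mul_sq (by norm_num : (0:ℝ) < 2⁻¹)

lemma integrable_sq_exp_half : Integrable (fun x : ℝ => x ^ 2 * rexp (-(2⁻¹) * x ^ 2)) volume := by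
  have := integrable_rpow_mul_exp_neg_mul_sq (by norm_num : (0:ℝ) < 2⁻¹) (s := 2) (by norm_num)
  convert this using 2 with x
  rw [show ((2:ℝ)) = ((2:ℕ):ℝ) by norm_num, Real.rpow_natCast]

lemma tendsto_exp_half_atTop : Tendsto (fun x : ℝ => rexp (-(2⁻¹) * x ^ 2)) atTop (nhds 0) := by
  apply Real.tendsto_exp_atBot.comp
  apply Tendsto.const_mul_atTop_of_neg (by norm_num : (-(2:ℝ)⁻¹) < 0)
  exact tendsto_pow_atTop (by norm_num)

lemma tendsto_exp_half_atBot : Tendsto (fun x : ℝ => rexp (-(2⁻¹) * x ^ 2)) atBot (nhds 0) := by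
  have := tendsto_exp_half_atTop.comp (tendsto_neg_atBot_atTop : Tendsto (Neg.neg : ℝ → ℝ) atBot atTop)
  simpa [Function.comp_def, neg_sq, neg_mul] using this

lemma tendsto_xexp_half_atTop : Tendsto (fun x : ℝ => x * rexp (-(2⁻¹) * x ^ 2)) atTop (nhds 0) := by
  have h := rpow_mul_exp_neg_mul_sq_isLittleO_exp_neg (by norm_num : (0:ℝ) < 2⁻¹) 1
  have h2 : Tendsto (fun x : ℝ => rexp (-(1/2) * x)) atTop (nhds 0) := by
    apply Real.tendsto_exp_atBot.comp
    exact Tendsto.const_mul_atTop_of_neg (by norm_num) tendsto_id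
  have h3 := h.trans_tendsto h2
  apply h3.congr'
  filter_upwards [eventually_gt_atTop (0:ℝ)] with x hx
  rw [Real.rpow_one]

lemma tendsto_xexp_half_atBot : Tendsto (fun x : ℝ => x * rexp (-(2⁻¹) * x ^ 2)) atBot (nhds 0) := by
  have := (tendsto_xexp_half_atTop.neg).comp (tendsto_neg_atBot_atTop : Tendsto (Neg.neg : ℝ → ℝ) atBot atTop)
  simpa [Function.comp_def, neg_sq, neg_mul] using this

lemma integral_xexp_half : ∫ x : ℝ, x * rexp (-(2⁻¹) * x ^ 2) = 0 := by
  have hderiv : ∀ x : ℝ, HasDerivAt (fun y : ℝ => -rexp (-(2⁻¹) * y ^ 2)) (x * rexp (-(2⁻¹) * x ^ 2)) x := by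
    intro x
    have h1 : HasDerivAt (fun y : ℝ => -(2⁻¹) * y ^ 2) (-(2⁻¹) * (2 * x)) x := by
      simpa using ((hasDerivAt_pow 2 x).const_mul (-(2:ℝ)⁻¹))
    have : HasDerivAt (fun y : ℝ => -rexp (-(2⁻¹) * y ^ 2)) _ x := (h1.exp).neg
    convert this using 1
    ring
  have := integral_of_hasDerivAt_of_tendsto hderiv integrable_mul_exp_half
    (tendsto_exp_half_atBot.neg) (tendsto_exp_half_atTop.neg)
  simpa using this

lemma integral_sqexp_half : ∫ x : ℝ, x ^ 2 * rexp (-(2⁻¹) * x ^ 2) = √(2 * π) := by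
  have hderiv : ∀ x : ℝ, HasDerivAt (fun y : ℝ => -(y * rexp (-(2⁻¹) * y ^ 2)))
      (x ^ 2 * rexp (-(2⁻¹) * x ^ 2) - rexp (-(2⁻¹) * x ^ 2)) x := by
    intro x
    have h1 : HasDerivAt (fun y : ℝ => -(2⁻¹) * y ^ 2) (-(2⁻¹) * (2 * x)) x := by
      simpa using ((hasDerivAt_pow 2 x).const_mul (-(2:ℝ)⁻¹))
    have h2 := (hasDerivAt_id x).mul h1.exp
    have : HasDerivAt (fun y : ℝ => -(y * rexp (-(2⁻¹) * y ^ 2))) _ x := h2.neg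
    convert this using 1
    simp
    ring
  have hint : Integrable (fun x : ℝ => x ^ 2 * rexp (-(2⁻¹) * x ^ 2) - rexp (-(2⁻¹) * x ^ 2)) volume :=
    integrable_sq_exp_half.sub integrable_exp_half
  have h := integral_of_hasDerivAt_of_tendsto hderiv hint
    (tendsto_xexp_half_atBot.neg) (tendsto_xexp_half_atTop.neg)
  rw [integral_sub integrable_sq_exp_half integrable_exp_half] at h
  have hg : ∫ x : ℝ, rexp (-(2⁻¹) * x ^ 2) = √(2 * π) := by
    have := integral_gaussian (2⁻¹ : ℝ)
    rw [show (π / 2⁻¹) = 2 * π by ring] at this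
    simpa using this
  rw [hg] at h
  linarith

lemma integral_id_gauss : ∫ x, x ∂(gaussianReal 0 1) = 0 := by
  rw [integral_gauss_transfer]
  simp only [pdf_eq]
  rw [show (fun x => (√(2 * π))⁻¹ * rexp (-(2⁻¹) * x ^ 2) * x) = fun x => (√(2 * π))⁻¹ * (x * rexp (-(2⁻¹) * x ^ 2)) from by funext x; ring]
  rw [integral_const_mul, integral_xexp_half, mul_zero]

lemma integral_sq_gauss : ∫ x, x ^ 2 ∂(gaussianReal 0 1) = 1 := by
  rw [integral_gauss_transfer]
  simp only [pdf_eq]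
  rw [show (fun x => (√(2 * π))⁻¹ * rexp (-(2⁻¹) * x ^ 2) * x ^ 2) = fun x => (√(2 * π))⁻¹ * (x ^ 2 * rexp (-(2⁻¹) * x ^ 2)) from by funext x; ring]
  rw [integral_const_mul, integral_sqexp_half]
  rw [inv_mul_cancel₀]
  positivity

lemma integrable_id_gauss : Integrable (fun x : ℝ => x) (gaussianReal 0 1) := by
  apply integrable_gauss_transfer
  simp only [pdf_eq]
  rw [show (fun x => (√(2 * π))⁻¹ * rexp (-(2⁻¹) * x ^ 2) * x) = fun x => (√(2 * π))⁻¹ * (x * rexp (-(2⁻¹) * x ^ 2)) from by funext x; ring]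
  exact integrable_mul_exp_half.const_mul _

lemma integrable_sq_gauss : Integrable (fun x : ℝ => x ^ 2) (gaussianReal 0 1) := by
  apply integrable_gauss_transfer
  simp only [pdf_eq]
  rw [show (fun x => (√(2 * π))⁻¹ * rexp (-(2⁻¹) * x ^ 2) * x ^ 2) = fun x => (√(2 * π))⁻¹ * (x ^ 2 * rexp (-(2⁻¹) * x ^ 2)) from by funext x; ring]
  exact integrable_sq_exp_half.const_mul _



def vnn (a : ℝ) : ℝ≥0 := Real.toNNReal (1 + a^2)

lemma vnn_coe (a : ℝ) : ((vnn a : ℝ≥0) : ℝ) = 1 + a^2 :=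
  Real.coe_toNNReal _ (by positivity)

lemma vnn_ne (a : ℝ) : vnn a ≠ 0 := by
  intro h
  have := vnn_coe a
  rw [h] at this
  simp at this
  nlinarith [sq_nonneg a]

lemma density_core (a u w : ℝ) :
    (1 + a^2)⁻¹ * (gaussianPDFReal 0 1 ((a * u + w) / (1 + a^2))
        * gaussianPDFReal 0 1 ((u - a * w) / (1 + a^2)))
      = gaussianPDFReal 0 (vnn a) u * gaussianPDFReal 0 (vnn a) w := by
  have hs : (0:ℝ) < 1 + a^2 := by positivity
  simp only [gaussianPDFReal_def, vnn_coe, NNReal.coe_one]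
  have hconst : (1 + a^2)⁻¹ * ((√(2 * π * 1))⁻¹ * (√(2 * π * 1))⁻¹)
      = (√(2 * π * (1 + a^2)))⁻¹ * (√(2 * π * (1 + a^2)))⁻¹ := by
    have h1 : (√(2 * π * 1))⁻¹ * (√(2 * π * 1))⁻¹ = (2 * π * 1)⁻¹ := by
      rw [← mul_inv, Real.mul_self_sqrt (by positivity)]
    have h2 : (√(2 * π * (1 + a^2)))⁻¹ * (√(2 * π * (1 + a^2)))⁻¹ = (2 * π * (1 + a^2))⁻¹ := by
      rw [← mul_inv, Real.mul_self_sqrt (by positivity)]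
    rw [h1, h2, ← mul_inv]
    congr 1
    ring
  have hexp : -((a * u + w) / (1 + a^2) - 0)^2 / (2 * 1) + -((u - a * w) / (1 + a^2) - 0)^2 / (2 * 1)
      = -(u - 0)^2 / (2 * (1 + a^2)) + -(w - 0)^2 / (2 * (1 + a^2)) := by
    field_simp
    ring
  calc (1 + a^2)⁻¹ * ((√(2 * π * 1))⁻¹ * rexp (-((a * u + w) / (1 + a^2) - 0)^2 / (2 * 1))
        * ((√(2 * π * 1))⁻¹ * rexp (-((u - a * w) / (1 + a^2) - 0)^2 / (2 * 1))))
      = ((1 + a^2)⁻¹ * ((√(2 * π * 1))⁻¹ * (√(2 * π * 1))⁻¹))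
          * rexp (-((a * u + w) / (1 + a^2) - 0)^2 / (2 * 1) + -((u - a * w) / (1 + a^2) - 0)^2 / (2 * 1)) := by
        rw [Real.exp_add]; ring
    _ = ((√(2 * π * (1 + a^2)))⁻¹ * (√(2 * π * (1 + a^2)))⁻¹)
          * rexp (-(u - 0)^2 / (2 * (1 + a^2)) + -(w - 0)^2 / (2 * (1 + a^2))) := by
        rw [hconst, hexp]
    _ = (√(2 * π * (1 + a^2)))⁻¹ * rexp (-(u - 0)^2 / (2 * (1 + a^2)))
          * ((√(2 * π * (1 + a^2)))⁻¹ * rexp (-(w - 0)^2 / (2 * (1 + a^2)))) := by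
        rw [Real.exp_add]; ring

variable {α β : Type*} [MeasurableSpace α] [MeasurableSpace β]

lemma map_withDensity_mequiv (e : α ≃ᵐ β) (μ : Measure α) {f : α → ℝ≥0∞} (hf : Measurable f) :
    Measure.map e (μ.withDensity f) = (Measure.map e μ).withDensity (f ∘ e.symm) := by
  ext s hs
  rw [Measure.map_apply e.measurable hs, withDensity_apply _ (e.measurable hs),
    withDensity_apply _ hs, setLIntegral_map hs (hf.comp e.symm.measurable) e.measurable]
  refine lintegral_congr fun x => ?_
  simp

lemma withDensity_prod (μ : Measure α) (ν : Measure β) [SigmaFinite μ] [SigmaFinite ν]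
    {f : α → ℝ≥0∞} {g : β → ℝ≥0∞} (hf : Measurable f) (hg : Measurable g)
    [SigmaFinite (μ.withDensity f)] [SigmaFinite (ν.withDensity g)] :
    (μ.withDensity f).prod (ν.withDensity g)
      = (μ.prod ν).withDensity (fun p => f p.1 * g p.2) := by
  refine Measure.prod_eq fun s t hs ht => ?_
  rw [withDensity_apply _ (hs.prod ht), ← Measure.prod_restrict,
    lintegral_prod_mul (hf.aemeasurable) (hg.aemeasurable),
    withDensity_apply _ hs, withDensity_apply _ ht]

def Tlin (a : ℝ) : (ℝ × ℝ) ≃ₗ[ℝ] (ℝ × ℝ) :=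
  LinearEquiv.ofLinear
    (Matrix.toLin (Module.Basis.finTwoProd ℝ) (Module.Basis.finTwoProd ℝ) !![a, 1; 1, -a])
    (Matrix.toLin (Module.Basis.finTwoProd ℝ) (Module.Basis.finTwoProd ℝ)
      !![a / (1 + a^2), 1 / (1 + a^2); 1 / (1 + a^2), -a / (1 + a^2)])
    (by
      rw [← Matrix.toLin_mul, show (!![a, 1; 1, -a] * !![a / (1 + a^2), 1 / (1 + a^2); 1 / (1 + a^2), -a / (1 + a^2)]) = 1 from by
        have h : (1 + a^2) ≠ 0 := by positivity
        ext i j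
        fin_cases i <;> fin_cases j <;>
          simp [Matrix.mul_apply, Fin.sum_univ_two, Matrix.one_apply] <;> field_simp <;> ring,
        Matrix.toLin_one])
    (by
      rw [← Matrix.toLin_mul, show (!![a / (1 + a^2), 1 / (1 + a^2); 1 / (1 + a^2), -a / (1 + a^2)] * !![a, 1; 1, -a]) = 1 from by
        have h : (1 + a^2) ≠ 0 := by positivity
        ext i j
        fin_cases i <;> fin_cases j <;>
          simp [Matrix.mul_apply, Fin.sum_univ_two, Matrix.one_apply] <;> field_simp <;> ring,
        Matrix.toLin_one])

lemma Tlin_apply (a : ℝ) (p : ℝ × ℝ) : Tlin a p = (a * p.1 + p.2, p.1 - a * p.2) := by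
  show (Matrix.toLin (Module.Basis.finTwoProd ℝ) (Module.Basis.finTwoProd ℝ) !![a, 1; 1, -a]) p = _
  rw [Matrix.toLin_finTwoProd_apply]
  simp
  ring

lemma Tlin_symm_apply (a : ℝ) (p : ℝ × ℝ) :
    (Tlin a).symm p = ((a * p.1 + p.2) / (1 + a^2), (p.1 - a * p.2) / (1 + a^2)) := by
  show (Matrix.toLin (Module.Basis.finTwoProd ℝ) (Module.Basis.finTwoProd ℝ)
      !![a / (1 + a^2), 1 / (1 + a^2); 1 / (1 + a^2), -a / (1 + a^2)]) p = _
  rw [Matrix.toLin_finTwoProd_apply]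
  simp only [Prod.mk.injEq]
  constructor <;> ring

lemma Tlin_det (a : ℝ) : LinearMap.det ((Tlin a).toLinearMap) = -(1 + a^2) := by
  show LinearMap.det ((Matrix.toLin (Module.Basis.finTwoProd ℝ) (Module.Basis.finTwoProd ℝ) !![a, 1; 1, -a])) = _
  rw [LinearMap.det_toLin, Matrix.det_fin_two_of]
  ring

def Tmeq (a : ℝ) : (ℝ × ℝ) ≃ᵐ (ℝ × ℝ) :=
  ((Tlin a).toContinuousLinearEquiv.toHomeomorph).toMeasurableEquiv

lemma Tmeq_coe (a : ℝ) : (Tmeq a : ℝ × ℝ → ℝ × ℝ) = fun p => (a * p.1 + p.2, p.1 - a * p.2) := by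
  funext p
  exact Tlin_apply a p

lemma Tmeq_symm_coe (a : ℝ) : ((Tmeq a).symm : ℝ × ℝ → ℝ × ℝ)
    = fun p => ((a * p.1 + p.2) / (1 + a^2), (p.1 - a * p.2) / (1 + a^2)) := by
  funext p
  exact Tlin_symm_apply a p

lemma map_volume_Tmeq (a : ℝ) :
    Measure.map (Tmeq a) (volume : Measure (ℝ × ℝ))
      = ENNReal.ofReal ((1 + a^2)⁻¹) • (volume : Measure (ℝ × ℝ)) := by
  have hdet : LinearMap.det ((Tlin a).toLinearMap) ≠ 0 := by
    rw [Tlin_det]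
    have : (0:ℝ) < 1 + a^2 := by positivity
    linarith
  have h := Measure.map_linearMap_addHaar_eq_smul_addHaar (volume : Measure (ℝ × ℝ)) hdet
  have hco : (⇑((Tlin a).toLinearMap) : ℝ × ℝ → ℝ × ℝ) = ⇑(Tmeq a) := rfl
  rw [hco, Tlin_det] at h
  rw [h]
  congr 1
  rw [abs_inv, abs_neg, abs_of_pos (by positivity : (0:ℝ) < 1 + a^2)]

lemma rotation_map (a : ℝ) :
    Measure.map (Tmeq a) ((gaussianReal 0 1).prod (gaussianReal 0 1))
      = (gaussianReal 0 (vnn a)).prod (gaussianReal 0 (vnn a)) := by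
  have h1 : gaussianReal 0 1 = (volume : Measure ℝ).withDensity (gaussianPDF 0 1) :=
    gaussianReal_of_var_ne_zero 0 one_ne_zero
  have hv : gaussianReal 0 (vnn a) = (volume : Measure ℝ).withDensity (gaussianPDF 0 (vnn a)) :=
    gaussianReal_of_var_ne_zero 0 (vnn_ne a)
  haveI i1 : IsProbabilityMeasure ((volume : Measure ℝ).withDensity (gaussianPDF 0 1)) :=
    h1 ▸ (inferInstance : IsProbabilityMeasure (gaussianReal 0 1))
  haveI i2 : IsProbabilityMeasure ((volume : Measure ℝ).withDensity (gaussianPDF 0 (vnn a))) :=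
    hv ▸ (inferInstance : IsProbabilityMeasure (gaussianReal 0 (vnn a)))
  rw [h1, hv]
  rw [withDensity_prod _ _ (measurable_gaussianPDF 0 1) (measurable_gaussianPDF 0 1),
    withDensity_prod _ _ (measurable_gaussianPDF 0 (vnn a)) (measurable_gaussianPDF 0 (vnn a))]
  have hDmeas : Measurable (fun p : ℝ × ℝ => gaussianPDF 0 1 p.1 * gaussianPDF 0 1 p.2) :=
    ((measurable_gaussianPDF 0 1).comp measurable_fst).mul
      ((measurable_gaussianPDF 0 1).comp measurable_snd)
  rw [← Measure.volume_eq_prod, map_withDensity_mequiv (Tmeq a) _ hDmeas, map_volume_Tmeq,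
    withDensity_smul_measure]
  rw [← withDensity_smul _ (hDmeas.comp (Tmeq a).symm.measurable)]
  congr 1
  funext p
  simp only [Pi.smul_apply, Function.comp_apply, smul_eq_mul, Tmeq_symm_coe]
  rw [gaussianPDF_def, gaussianPDF_def]
  simp only
  rw [← ENNReal.ofReal_mul (gaussianPDFReal_nonneg _ _ _), ← ENNReal.ofReal_mul (by positivity),
    ← ENNReal.ofReal_mul (gaussianPDFReal_nonneg _ _ _)]
  rw [← density_core a p.1 p.2]


lemma rotation_map2 (a : ℝ) :
    Measure.map (fun p : ℝ × ℝ => (a * p.1 + p.2, p.1 - a * p.2)) ((gaussianReal 0 1).prod (gaussianReal 0 1))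
      = (gaussianReal 0 (vnn a)).prod (gaussianReal 0 (vnn a)) := by
  rw [← Tmeq_coe]
  exact rotation_map a

lemma Tmeas (a : ℝ) : Measurable (fun p : ℝ × ℝ => (a * p.1 + p.2, p.1 - a * p.2)) :=
  ((measurable_fst.const_mul a).add measurable_snd).prodMk
    (measurable_fst.sub (measurable_snd.const_mul a))

variable {Θ : Type*} [mΘ : MeasurableSpace Θ] {P : Measure Θ} [IsProbabilityMeasure P]

lemma pair_law {X Y : Θ → ℝ} (hX : Measurable X) (hY : Measurable Y)
    (h : IndepFun X Y P) (hXl : P.map X = gaussianReal 0 1) (hYl : P.map Y = gaussianReal 0 1) :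
    Measure.map (fun θ => (X θ, Y θ)) P = (gaussianReal 0 1).prod (gaussianReal 0 1) := by
  rw [indepFun_iff_map_prod_eq_prod_map_map hX.aemeasurable hY.aemeasurable] at h
  rw [h, hXl, hYl]

lemma UV_law {X Y : Θ → ℝ} (hX : Measurable X) (hY : Measurable Y)
    (h : IndepFun X Y P) (hXl : P.map X = gaussianReal 0 1) (hYl : P.map Y = gaussianReal 0 1)
    (a : ℝ) :
    Measure.map (fun θ => (a * X θ + Y θ, X θ - a * Y θ)) P
      = (gaussianReal 0 (vnn a)).prod (gaussianReal 0 (vnn a)) := by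
  have hcomp : (fun θ => (a * X θ + Y θ, X θ - a * Y θ))
      = (fun p : ℝ × ℝ => (a * p.1 + p.2, p.1 - a * p.2)) ∘ (fun θ => (X θ, Y θ)) := rfl
  rw [hcomp, ← Measure.map_map (Tmeas a) (hX.prodMk hY), pair_law hX hY h hXl hYl,
    rotation_map2 a]

lemma UV_indep {X Y : Θ → ℝ} (hX : Measurable X) (hY : Measurable Y)
    (h : IndepFun X Y P) (hXl : P.map X = gaussianReal 0 1) (hYl : P.map Y = gaussianReal 0 1)
    (a : ℝ) :
    IndepFun (fun θ => a * X θ + Y θ) (fun θ => X θ - a * Y θ) P := by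
  have hU : Measurable (fun θ => a * X θ + Y θ) := (hX.const_mul a).add hY
  have hV : Measurable (fun θ => X θ - a * Y θ) := hX.sub (hY.const_mul a)
  rw [indepFun_iff_map_prod_eq_prod_map_map hU.aemeasurable hV.aemeasurable]
  have hUVl := UV_law hX hY h hXl hYl a
  have hUl : P.map (fun θ => a * X θ + Y θ) = gaussianReal 0 (vnn a) := by
    have h1 : Measure.map Prod.fst (Measure.map (fun θ => ((fun θ => a * X θ + Y θ) θ, (fun θ => X θ - a * Y θ) θ)) P)
        = P.map (fun θ => a * X θ + Y θ) :=
      Measure.map_map measurable_fst (hU.prodMk hV)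
    rw [← h1, hUVl, ← Measure.fst, Measure.fst_prod]
  have hVl : P.map (fun θ => X θ - a * Y θ) = gaussianReal 0 (vnn a) := by
    have h1 : Measure.map Prod.snd (Measure.map (fun θ => ((fun θ => a * X θ + Y θ) θ, (fun θ => X θ - a * Y θ) θ)) P)
        = P.map (fun θ => X θ - a * Y θ) :=
      Measure.map_map measurable_snd (hU.prodMk hV)
    rw [← h1, hUVl, ← Measure.snd, Measure.snd_prod]
  rw [hUl, hVl, hUVl]

lemma coord (ξ ω : ℕ → Θ → ℝ) (hξm : ∀ i, Measurable (ξ i)) (hωm : ∀ i, Measurable (ω i))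
    (hindep : iIndepFun (Sum.elim ξ ω) P)
    (hξlaw : ∀ i, P.map (ξ i) = gaussianReal 0 1)
    (hωlaw : ∀ i, P.map (ω i) = gaussianReal 0 1)
    (A : ℕ → ℝ) (i : ℕ) :
    Indep (⨆ j, MeasurableSpace.comap (fun θ => A j * ξ j θ + ω j θ) inferInstance)
      (MeasurableSpace.comap (fun θ => ξ i θ - A i * ω i θ) inferInstance) P := by
  classical
  set a : ℝ := A i with ha
  have hpairindep : IndepFun (ξ i) (ω i) P :=
    hindep.indepFun (show (Sum.inl i : ℕ ⊕ ℕ) ≠ Sum.inr i by simp)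
  have hUV : IndepFun (fun θ => a * ξ i θ + ω i θ) (fun θ => ξ i θ - a * ω i θ) P :=
    UV_indep (hξm i) (hωm i) hpairindep (hξlaw i) (hωlaw i) a
  set F : ℕ ⊕ ℕ → Θ → ℝ := fun k =>
    if k = Sum.inl i then (fun θ => a * ξ i θ + ω i θ)
    else if k = Sum.inr i then (fun θ => ξ i θ - a * ω i θ)
    else Sum.elim ξ ω k with hFdef
  have hFm : ∀ k, Measurable (F k) := by
    intro k
    rw [hFdef]
    dsimp only
    split_ifs
    · exact ((hξm i).const_mul a).add (hωm i)
    · exact (hξm i).sub ((hωm i).const_mul a)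
    · rcases k with j | j
      · exact hξm j
      · exact hωm j
  have hFl : F (Sum.inl i) = fun θ => a * ξ i θ + ω i θ := by simp [hFdef]
  have hFr : F (Sum.inr i) = fun θ => ξ i θ - a * ω i θ := by simp [hFdef]
  have helimle : ∀ k : ℕ ⊕ ℕ, MeasurableSpace.comap (Sum.elim ξ ω k) (inferInstance : MeasurableSpace ℝ) ≤ mΘ := by
    intro k; rcases k with j | j
    · exact (hξm j).comap_le
    · exact (hωm j).comap_le
  -- the joint independence of the modified family
  have hiIndep : iIndep (fun k => MeasurableSpace.comap (F k) (inferInstance : MeasurableSpace ℝ)) P := by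
    refine iIndepSets.iIndep (fun k => (hFm k).comap_le)
      (fun k => {s | MeasurableSet[MeasurableSpace.comap (F k) inferInstance] s})
      (fun k s hs t ht _ => by
        simp only [Set.mem_setOf_eq] at hs ht ⊢
        exact hs.inter ht)
      (fun k => (@generateFrom_measurableSet Θ (MeasurableSpace.comap (F k) inferInstance)).symm)
      ?_
    rw [iIndepSets_iff]
    intro S f hf
    set g : ℕ ⊕ ℕ → Set Θ := fun k => if k ∈ S then f k else Set.univ with hgdef
    have hg : ∀ k, MeasurableSet[MeasurableSpace.comap (F k) inferInstance] (g k) := by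
      intro k
      by_cases h : k ∈ S
      · simpa [hgdef, h] using hf k h
      · simp [hgdef, h]
    set S0 : Finset (ℕ ⊕ ℕ) := (S.erase (Sum.inl i)).erase (Sum.inr i) with hS0def
    have hS0l : Sum.inl i ∉ S0 := by simp [hS0def]
    have hS0r : Sum.inr i ∉ S0 := by simp [hS0def]
    have hT : insert (Sum.inl i) (insert (Sum.inr i) S0) = insert (Sum.inl i) (insert (Sum.inr i) S) := by
      ext k
      simp only [hS0def, Finset.mem_insert, Finset.mem_erase]
      tauto
    have hsub : S ⊆ insert (Sum.inl i) (insert (Sum.inr i) S0) := by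
      rw [hT]
      intro k hk
      simp [hk]
    have hIeq : ⋂ k ∈ S, f k = ⋂ k ∈ insert (Sum.inl i) (insert (Sum.inr i) S0), g k := by
      ext θ
      simp only [Set.mem_iInter]
      constructor
      · intro h k hk
        by_cases hkS : k ∈ S
        · simpa [hgdef, hkS] using h k hkS
        · simp [hgdef, hkS]
      · intro h k hk
        have := h k (hsub hk)
        simpa [hgdef, hk] using this
    have hPeq : ∏ k ∈ S, P (f k) = ∏ k ∈ insert (Sum.inl i) (insert (Sum.inr i) S0), P (g k) := by
      rw [show ∏ k ∈ S, P (f k) = ∏ k ∈ S, P (g k) from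
        Finset.prod_congr rfl fun k hk => by simp [hgdef, hk]]
      exact Finset.prod_subset hsub fun k _ hk => by simp [hgdef, hk]
    rw [hIeq, hPeq]
    have hl1 : Sum.inl i ∉ insert (Sum.inr i) S0 := by
      simp only [Finset.mem_insert]
      push_neg
      exact ⟨by simp, hS0l⟩
    rw [Finset.set_biInter_insert, Finset.set_biInter_insert,
      Finset.prod_insert hl1, Finset.prod_insert hS0r]
    obtain ⟨A1, hA1, hA1e⟩ := (measurableSet_comap).mp (hg (Sum.inl i))
    obtain ⟨A2, hA2, hA2e⟩ := (measurableSet_comap).mp (hg (Sum.inr i))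
    set msup : MeasurableSpace Θ := MeasurableSpace.comap (ξ i) inferInstance ⊔ MeasurableSpace.comap (ω i) inferInstance with hmsup
    have hξsup : Measurable[msup] (ξ i) := measurable_iff_comap_le.mpr le_sup_left
    have hωsup : Measurable[msup] (ω i) := measurable_iff_comap_le.mpr le_sup_right
    have hUm : Measurable[msup] (fun θ => a * ξ i θ + ω i θ) := (hξsup.const_mul a).add hωsup
    have hVm : Measurable[msup] (fun θ => ξ i θ - a * ω i θ) := hξsup.sub (hωsup.const_mul a)
    have hgl : MeasurableSet[msup] (g (Sum.inl i)) := by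
      rw [← hA1e, hFl]
      exact hUm hA1
    have hgr : MeasurableSet[msup] (g (Sum.inr i)) := by
      rw [← hA2e, hFr]
      exact hVm hA2
    have hblockindep : Indep msup
        (⨆ k ∈ (↑S0 : Set (ℕ ⊕ ℕ)), MeasurableSpace.comap (Sum.elim ξ ω k) inferInstance) P := by
      have h := indep_iSup_of_disjoint helimle hindep.iIndep
        (S := ({Sum.inl i, Sum.inr i} : Set (ℕ ⊕ ℕ))) (T := (↑S0 : Set (ℕ ⊕ ℕ)))
        (by
          rw [Set.disjoint_left]
          intro k hk hk0
          have hk0' : k ∈ S0 := hk0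
          rcases hk with rfl | hk
          · exact hS0l hk0'
          · rw [Set.mem_singleton_iff] at hk
            subst hk
            exact hS0r hk0')
      rwa [iSup_pair] at h
    have hgkS0 : ∀ k ∈ S0, MeasurableSet[MeasurableSpace.comap (Sum.elim ξ ω k) inferInstance] (g k) := by
      intro k hk
      have hne1 : k ≠ Sum.inl i := fun h => hS0l (h ▸ hk)
      have hne2 : k ≠ Sum.inr i := fun h => hS0r (h ▸ hk)
      have hFk : F k = Sum.elim ξ ω k := by simp [hFdef, hne1, hne2]
      have := hg k
      rwa [hFk] at this
    have hD : MeasurableSet[⨆ k ∈ (↑S0 : Set (ℕ ⊕ ℕ)), MeasurableSpace.comap (Sum.elim ξ ω k) inferInstance]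
        (⋂ k ∈ S0, g k) := by
      refine Finset.measurableSet_biInter S0 fun k hk => ?_
      have hle2 : MeasurableSpace.comap (Sum.elim ξ ω k) inferInstance
          ≤ ⨆ k ∈ (↑S0 : Set (ℕ ⊕ ℕ)), MeasurableSpace.comap (Sum.elim ξ ω k) inferInstance :=
        le_biSup (fun k : ℕ ⊕ ℕ => MeasurableSpace.comap (Sum.elim ξ ω k) (inferInstance : MeasurableSpace ℝ)) (Finset.mem_coe.mpr hk)
      exact hle2 _ (hgkS0 k hk)
    have step1 : P ((g (Sum.inl i) ∩ g (Sum.inr i)) ∩ ⋂ k ∈ S0, g k)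
        = P (g (Sum.inl i) ∩ g (Sum.inr i)) * P (⋂ k ∈ S0, g k) :=
      (Indep_iff _ _ _).mp hblockindep _ _ (hgl.inter hgr) hD
    have step2 : P (g (Sum.inl i) ∩ g (Sum.inr i)) = P (g (Sum.inl i)) * P (g (Sum.inr i)) := by
      rw [← hA1e, ← hA2e, hFl, hFr]
      exact indepFun_iff_measure_inter_preimage_eq_mul.mp hUV A1 A2 hA1 hA2
    have step3 : P (⋂ k ∈ S0, g k) = ∏ k ∈ S0, P (g k) := hindep.meas_biInter hgkS0
    rw [← Set.inter_assoc, step1, step2, step3, mul_assoc]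
  -- now conclude
  have hle : ∀ k, MeasurableSpace.comap (F k) (inferInstance : MeasurableSpace ℝ) ≤ mΘ :=
    fun k => (hFm k).comap_le
  have h := indep_iSup_of_disjoint hle hiIndep
    (S := ({Sum.inr i}ᶜ : Set (ℕ ⊕ ℕ))) (T := ({Sum.inr i} : Set (ℕ ⊕ ℕ))) disjoint_compl_left
  have hTsingle : (⨆ k ∈ ({Sum.inr i} : Set (ℕ ⊕ ℕ)), MeasurableSpace.comap (F k) inferInstance)
      = MeasurableSpace.comap (fun θ => ξ i θ - a * ω i θ) inferInstance := by
    rw [show (⨆ k ∈ ({Sum.inr i} : Set (ℕ ⊕ ℕ)), MeasurableSpace.comap (F k) inferInstance)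
        = MeasurableSpace.comap (F (Sum.inr i)) inferInstance from by simp, hFr]
  rw [hTsingle] at h
  refine indep_of_indep_of_le_left h ?_
  refine iSup_le fun j => ?_
  by_cases hj : j = i
  · subst hj
    have hF : F (Sum.inl j) = fun θ => A j * ξ j θ + ω j θ := hFl
    rw [← hF]
    exact le_biSup (fun k => MeasurableSpace.comap (F k) (inferInstance : MeasurableSpace ℝ))
      (show Sum.inl j ∈ ({Sum.inr j}ᶜ : Set (ℕ ⊕ ℕ)) from by simp)
  · set M := ⨆ k ∈ ({Sum.inr i}ᶜ : Set (ℕ ⊕ ℕ)), MeasurableSpace.comap (F k) inferInstance with hM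
    have hξj : Measurable[M] (ξ j) := by
      have hF : F (Sum.inl j) = ξ j := by simp [hFdef, hj]
      refine measurable_iff_comap_le.mpr ?_
      rw [← hF]
      exact le_biSup (fun k => MeasurableSpace.comap (F k) (inferInstance : MeasurableSpace ℝ))
        (show Sum.inl j ∈ ({Sum.inr i}ᶜ : Set (ℕ ⊕ ℕ)) from by simp)
    have hωj : Measurable[M] (ω j) := by
      have hF : F (Sum.inr j) = ω j := by simp [hFdef, hj]
      refine measurable_iff_comap_le.mpr ?_
      rw [← hF]
      exact le_biSup (fun k => MeasurableSpace.comap (F k) (inferInstance : MeasurableSpace ℝ))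
        (show Sum.inr j ∈ ({Sum.inr i}ᶜ : Set (ℕ ⊕ ℕ)) from by simp [hj])
    exact Measurable.comap_le ((hξj.const_mul (A j)).add hωj)


lemma gaussP {Θ : Type*} [mΘ : MeasurableSpace Θ] {P : Measure Θ} [IsProbabilityMeasure P]
    {f : Θ → ℝ} (hf : Measurable f) (hl : P.map f = gaussianReal 0 1) :
    Integrable f P ∧ Integrable (fun θ => f θ ^ 2) P
      ∧ (∫ θ, f θ ∂P) = 0 ∧ (∫ θ, f θ ^ 2 ∂P) = 1 := by
  refine ⟨?_, ?_, ?_, ?_⟩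
  · have h := integrable_id_gauss
    rw [← hl] at h
    exact (integrable_map_measure measurable_id.aestronglyMeasurable hf.aemeasurable).mp h
  · have h := integrable_sq_gauss
    rw [← hl] at h
    exact (integrable_map_measure (measurable_id.pow_const 2).aestronglyMeasurable
      hf.aemeasurable).mp h
  · have h2 : ∫ θ, f θ ∂P = ∫ x, x ∂(P.map f) :=
      (integral_map hf.aemeasurable measurable_id.aestronglyMeasurable).symm
    rw [h2, hl, integral_id_gauss]
  · have h2 : ∫ θ, f θ ^ 2 ∂P = ∫ x, x ^ 2 ∂(P.map f) :=
      (integral_map hf.aemeasurable (measurable_id.pow_const 2).aestronglyMeasurable).symm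
    rw [h2, hl, integral_sq_gauss]

end NCA

open NCA

/-- With `{ξ_i, ω_i}` a jointly independent family of standard Gaussians,
`Σ_i λ_i < ∞`, `γ > 0`, `η_i = √γ √λ_i ξ_i + ω_i`, and `𝒢 = σ(η_i, i ∈ ℕ)`, the total
mean square estimation error is `Σ_i E[(√λ_i ξ_i − E(√λ_i ξ_i | 𝒢))²] = Σ_i λ_i / (1 + λ_i γ)`. -/
theorem noncausal_error_gaussian_coordinates
    {Θ : Type*} [mΘ : MeasurableSpace Θ] (P : Measure Θ) [IsProbabilityMeasure P]
    (ξ ω : ℕ → Θ → ℝ) (hξm : ∀ i, Measurable (ξ i)) (hωm : ∀ i, Measurable (ω i))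
    (hindep : iIndepFun
      (Sum.elim ξ ω) P)
    (hξlaw : ∀ i, P.map (ξ i) = gaussianReal 0 1)
    (hωlaw : ∀ i, P.map (ω i) = gaussianReal 0 1)
    (lam : ℕ → ℝ) (hlam : ∀ i, 0 ≤ lam i) (hsum : Summable lam)
    (γ : ℝ) (hγ : 0 < γ)
    (η : ℕ → Θ → ℝ)
    (hη : ∀ i, η i = fun θ => Real.sqrt γ * Real.sqrt (lam i) * ξ i θ + ω i θ) :
    ∑' i, ∫ θ, (Real.sqrt (lam i) * ξ i θ
        - (P[fun θ => Real.sqrt (lam i) * ξ i θ |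
            ⨆ j, MeasurableSpace.comap (η j) inferInstance]) θ) ^ 2 ∂P
      = ∑' i, lam i / (1 + lam i * γ) := by
  classical
  refine tsum_congr fun i => ?_
  set a : ℝ := Real.sqrt γ * Real.sqrt (lam i) with ha
  have ha2 : a ^ 2 = lam i * γ := by
    rw [ha, mul_pow, Real.sq_sqrt hγ.le, Real.sq_sqrt (hlam i)]
    ring
  have hs2 : (0:ℝ) < 1 + a ^ 2 := by positivity
  have hs2' : (1:ℝ) + a ^ 2 ≠ 0 := ne_of_gt hs2
  have hηm : ∀ j, Measurable (η j) := fun j => by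
    rw [hη j]
    exact ((hξm j).const_mul _).add (hωm j)
  have hle : (⨆ j, MeasurableSpace.comap (η j) inferInstance) ≤ mΘ :=
    iSup_le fun j => (hηm j).comap_le
  haveI : SigmaFinite (P.trim hle) := inferInstance
  obtain ⟨hIξ, hIξ2, hEξ, hEξ2⟩ := gaussP (hξm i) (hξlaw i)
  obtain ⟨hIω, hIω2, hEω, hEω2⟩ := gaussP (hωm i) (hωlaw i)
  have hpairindep : IndepFun (ξ i) (ω i) P :=
    hindep.indepFun (show (Sum.inl i : ℕ ⊕ ℕ) ≠ Sum.inr i by simp)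
  have hIξω : Integrable (fun θ => ξ i θ * ω i θ) P := hpairindep.integrable_mul hIξ hIω
  have hEξω : ∫ θ, ξ i θ * ω i θ ∂P = 0 := by
    have h : ∫ θ, ξ i θ * ω i θ ∂P = (∫ θ, ξ i θ ∂P) * ∫ θ, ω i θ ∂P :=
      hpairindep.integral_mul_eq_mul_integral hIξ.aestronglyMeasurable hIω.aestronglyMeasurable
    rw [h, hEξ, zero_mul]
  set c : ℝ := a * Real.sqrt (lam i) / (1 + a ^ 2) with hc
  set Z : Θ → ℝ := fun θ => Real.sqrt (lam i) / (1 + a ^ 2) * (ξ i θ - a * ω i θ) with hZ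
  have hIZ : Integrable Z P := (hIξ.sub (hIω.const_mul a)).const_mul _
  have hEZ : ∫ θ, Z θ ∂P = 0 := by
    have hIsub : Integrable (fun θ => ξ i θ - a * ω i θ) P := hIξ.sub (hIω.const_mul a)
    have hIaω : Integrable (fun θ => a * ω i θ) P := hIω.const_mul a
    show ∫ θ, Real.sqrt (lam i) / (1 + a ^ 2) * (ξ i θ - a * ω i θ) ∂P = 0
    rw [integral_const_mul, integral_sub hIξ hIaω, integral_const_mul, hEξ, hEω]
    ring
  have hGeq : (⨆ j, MeasurableSpace.comap (η j) inferInstance) = ⨆ j, MeasurableSpace.comap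
      (fun θ => Real.sqrt γ * Real.sqrt (lam j) * ξ j θ + ω j θ) inferInstance :=
    iSup_congr fun j => by rw [hη j]
  have hZWindep : Indep (⨆ j, MeasurableSpace.comap (η j) inferInstance)
      (MeasurableSpace.comap (fun θ => ξ i θ - a * ω i θ) inferInstance) P := by
    rw [hGeq, ha]
    exact coord ξ ω hξm hωm hindep hξlaw hωlaw (fun j => Real.sqrt γ * Real.sqrt (lam j)) i
  have hmηG : Measurable[⨆ j, MeasurableSpace.comap (η j) inferInstance] (η i) :=
    measurable_iff_comap_le.mpr (le_iSup (fun j => MeasurableSpace.comap (η j) inferInstance) i)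
  have hsmη : StronglyMeasurable[⨆ j, MeasurableSpace.comap (η j) inferInstance] (fun θ => c * η i θ) :=
    (hmηG.const_mul c).stronglyMeasurable
  have hIη : Integrable (η i) P := by
    rw [hη i]
    exact (hIξ.const_mul _).add hIω
  have hIcη : Integrable (fun θ => c * η i θ) P := hIη.const_mul c
  have hXeq : (fun θ => Real.sqrt (lam i) * ξ i θ) = (fun θ => c * η i θ) + Z := by
    funext θ
    simp only [Pi.add_apply, hη i, hZ, hc]
    field_simp
    ring
  have hsmZ : StronglyMeasurable[MeasurableSpace.comap (fun θ => ξ i θ - a * ω i θ)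
      inferInstance] Z := by
    have h1 : Measurable[MeasurableSpace.comap (fun θ => ξ i θ - a * ω i θ) inferInstance]
        (fun θ => ξ i θ - a * ω i θ) := measurable_iff_comap_le.mpr le_rfl
    exact (h1.const_mul _).stronglyMeasurable
  have hcondZ : P[Z|⨆ j, MeasurableSpace.comap (η j) inferInstance] =ᵐ[P] fun _ => ∫ θ, Z θ ∂P :=
    condExp_indep_eq (Measurable.comap_le ((hξm i).sub ((hωm i).const_mul a))) hle hsmZ
      hZWindep.symm
  have hcondcη : P[fun θ => c * η i θ|⨆ j, MeasurableSpace.comap (η j) inferInstance] = fun θ => c * η i θ :=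
    condExp_of_stronglyMeasurable hle hsmη hIcη
  have hce : P[fun θ => Real.sqrt (lam i) * ξ i θ|⨆ j, MeasurableSpace.comap (η j) inferInstance] =ᵐ[P] fun θ => c * η i θ := by
    rw [hXeq]
    refine (condExp_add hIcη hIZ _).trans ?_
    rw [hcondcη]
    filter_upwards [hcondZ] with θ hθ
    simp only [Pi.add_apply]
    rw [hθ, hEZ, add_zero]
  have hae : (fun θ => (Real.sqrt (lam i) * ξ i θ
        - (P[fun θ => Real.sqrt (lam i) * ξ i θ|⨆ j, MeasurableSpace.comap (η j) inferInstance]) θ) ^ 2)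
      =ᵐ[P] fun θ => Z θ ^ 2 := by
    filter_upwards [hce] with θ hθ
    rw [hθ]
    have h2 := congrFun hXeq θ
    simp only [Pi.add_apply] at h2
    rw [show Real.sqrt (lam i) * ξ i θ - c * η i θ = Z θ from by linarith]
  rw [integral_congr_ae hae]
  have hIbase : Integrable (fun θ => (ξ i θ - a * ω i θ) ^ 2) P := by
    have hexp : (fun θ => (ξ i θ - a * ω i θ) ^ 2)
        = fun θ => (ξ i θ ^ 2 - 2 * a * (ξ i θ * ω i θ)) + a ^ 2 * ω i θ ^ 2 := by
      funext θ; ring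
    rw [hexp]
    exact (hIξ2.sub (hIξω.const_mul _)).add (hIω2.const_mul _)
  have hEbase : ∫ θ, (ξ i θ - a * ω i θ) ^ 2 ∂P = 1 + a ^ 2 := by
    have hexp : (fun θ => (ξ i θ - a * ω i θ) ^ 2)
        = fun θ => (ξ i θ ^ 2 - 2 * a * (ξ i θ * ω i θ)) + a ^ 2 * ω i θ ^ 2 := by
      funext θ; ring
    have hI3 : Integrable (fun θ => 2 * a * (ξ i θ * ω i θ)) P := hIξω.const_mul _
    have hI1 : Integrable (fun θ => ξ i θ ^ 2 - 2 * a * (ξ i θ * ω i θ)) P := hIξ2.sub hI3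
    have hI2 : Integrable (fun θ => a ^ 2 * ω i θ ^ 2) P := hIω2.const_mul _
    rw [hexp, integral_add hI1 hI2, integral_sub hIξ2 hI3, integral_const_mul, integral_const_mul,
      hEξ2, hEξω, hEω2]
    ring
  have hZsq : ∫ θ, Z θ ^ 2 ∂P = lam i / (1 + a ^ 2) := by
    have hexp2 : (fun θ => Z θ ^ 2)
        = fun θ => (Real.sqrt (lam i) / (1 + a ^ 2)) ^ 2 * (ξ i θ - a * ω i θ) ^ 2 := by
      funext θ
      rw [hZ]
      ring
    rw [hexp2, integral_const_mul, hEbase, div_pow, Real.sq_sqrt (hlam i)]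
    field_simp
  rw [hZsq, ha2]
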